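/- Let K be a field, n ≥ 1 and m, l ≥ 0 with m + l ≤ n, and let U, V ∈ M_n(K) be the block matrices U = [[I_m,0],[0,0]] (blocks of sizes m, n−m) and V = [[0,0,0],[0,I_l,0],[0,0,0]] (blocks of sizes m, l, n−m−l). Then the K-vector space {(X, X') ∈ M_n(K) × M_n(K) : U·X = X'·U and X·V = V·X'} has dimension n² + (n − m − l)². -/

import Mathlib

/-- The block matrix `U = [[Iₘ, 0],[0,0]]` (blocks of sizes `m`, `n−m`). -/
def Umat (K : Type*) [Field K] (n m : ℕ) : Matrix (Fin n) (Fin n) K :=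
  fun i j => if i = j ∧ i.val < m then 1 else 0

/-- The block matrix `V = [[0,0,0],[0,I_l,0],[0,0,0]]` (blocks of sizes `m`, `l`, `n−m−l`). -/
def Vmat (K : Type*) [Field K] (n m l : ℕ) : Matrix (Fin n) (Fin n) K :=
  fun i j => if i = j ∧ m ≤ i.val ∧ i.val < m + l then 1 else 0

/-- The space of pairs `(X, X')` of `n×n` matrices with `U·X = X'·U` and `X·V = V·X'`. -/
def solSpace (K : Type*) [Field K] (n m l : ℕ) :
    Submodule K (Matrix (Fin n) (Fin n) K × Matrix (Fin n) (Fin n) K) where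
  carrier := {q | Umat K n m * q.1 = q.2 * Umat K n m ∧ q.1 * Vmat K n m l = Vmat K n m l * q.2}
  add_mem' := by
    rintro a b ⟨ha1, ha2⟩ ⟨hb1, hb2⟩
    constructor
    · simp only [Prod.fst_add, Prod.snd_add, Matrix.mul_add, Matrix.add_mul, ha1, hb1]
    · simp only [Prod.fst_add, Prod.snd_add, Matrix.mul_add, Matrix.add_mul, ha2, hb2]
  zero_mem' := by simp
  smul_mem' := by
    rintro c a ⟨ha1, ha2⟩
    constructor
    · simp only [Prod.smul_fst, Prod.smul_snd, Matrix.mul_smul, Matrix.smul_mul, ha1]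
    · simp only [Prod.smul_fst, Prod.smul_snd, Matrix.mul_smul, Matrix.smul_mul, ha2]

section Aux

variable (K : Type*) [Field K] (n m l : ℕ)

lemma Umat_eq_diagonal :
    Umat K n m = Matrix.diagonal (fun i : Fin n => if (i : ℕ) < m then (1 : K) else 0) := by
  funext i j
  rw [Matrix.diagonal_apply]
  by_cases h : i = j
  · subst h; simp [Umat]
  · simp [Umat, h]

lemma Vmat_eq_diagonal :
    Vmat K n m l = Matrix.diagonal
      (fun i : Fin n => if m ≤ (i : ℕ) ∧ (i : ℕ) < m + l then (1 : K) else 0) := by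
  funext i j
  rw [Matrix.diagonal_apply]
  by_cases h : i = j
  · subst h; simp [Vmat]
  · simp [Vmat, h]

lemma mem_solSpace_iff (p : Matrix (Fin n) (Fin n) K × Matrix (Fin n) (Fin n) K) :
    p ∈ solSpace K n m l ↔ ∀ i j : Fin n,
      ((if (i : ℕ) < m then p.1 i j else 0) = (if (j : ℕ) < m then p.2 i j else 0)) ∧
      ((if m ≤ (j : ℕ) ∧ (j : ℕ) < m + l then p.1 i j else 0)
        = (if m ≤ (i : ℕ) ∧ (i : ℕ) < m + l then p.2 i j else 0)) := by
  constructor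
  · rintro ⟨h1, h2⟩ i j
    rw [Umat_eq_diagonal] at h1
    rw [Vmat_eq_diagonal] at h2
    have e1 : (Matrix.diagonal (fun i : Fin n => if (i : ℕ) < m then (1 : K) else 0) * p.1) i j
        = (p.2 * Matrix.diagonal (fun i : Fin n => if (i : ℕ) < m then (1 : K) else 0)) i j := by
      rw [h1]
    have e2 : (p.1 * Matrix.diagonal
          (fun i : Fin n => if m ≤ (i : ℕ) ∧ (i : ℕ) < m + l then (1 : K) else 0)) i j
        = (Matrix.diagonal
          (fun i : Fin n => if m ≤ (i : ℕ) ∧ (i : ℕ) < m + l then (1 : K) else 0) * p.2) i j := by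
      rw [h2]
    rw [Matrix.diagonal_mul, Matrix.mul_diagonal] at e1
    rw [Matrix.diagonal_mul, Matrix.mul_diagonal] at e2
    constructor
    · simpa [ite_mul, mul_ite] using e1
    · simpa [ite_mul, mul_ite] using e2
  · intro h
    constructor
    · rw [Umat_eq_diagonal]
      ext i j
      rw [Matrix.diagonal_mul, Matrix.mul_diagonal]
      simpa [ite_mul, mul_ite] using (h i j).1
    · rw [Vmat_eq_diagonal]
      ext i j
      rw [Matrix.diagonal_mul, Matrix.mul_diagonal]
      simpa [ite_mul, mul_ite] using (h i j).2

/-- Forward map: repackage a solution pair into a full matrix plus a small matrix. -/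
def fwd (p : Matrix (Fin n) (Fin n) K × Matrix (Fin n) (Fin n) K) :
    Matrix (Fin n) (Fin n) K × Matrix (Fin (n - m - l)) (Fin (n - m - l)) K :=
  (fun i j => if m ≤ (j : ℕ) ∧ ((i : ℕ) < m ∨ (m + l ≤ (i : ℕ) ∧ (j : ℕ) < m + l))
      then p.2 i j else p.1 i j,
   fun a b => p.2 ⟨m + l + (a : ℕ), by have := a.isLt; omega⟩
      ⟨m + l + (b : ℕ), by have := b.isLt; omega⟩)

/-- Backward map. -/
def bwd (q : Matrix (Fin n) (Fin n) K × Matrix (Fin (n - m - l)) (Fin (n - m - l)) K) :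
    Matrix (Fin n) (Fin n) K × Matrix (Fin n) (Fin n) K :=
  (fun i j => if m ≤ (j : ℕ) ∧ ((i : ℕ) < m ∨ (m + l ≤ (i : ℕ) ∧ (j : ℕ) < m + l))
      then 0 else q.1 i j,
   fun i j =>
     if (i : ℕ) < m then q.1 i j
     else if (i : ℕ) < m + l then (if m ≤ (j : ℕ) ∧ (j : ℕ) < m + l then q.1 i j else 0)
     else if (j : ℕ) < m then 0
     else if hj : m + l ≤ (j : ℕ) then
       q.2 ⟨(i : ℕ) - (m + l), by have := i.isLt; omega⟩
           ⟨(j : ℕ) - (m + l), by have := j.isLt; omega⟩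
     else q.1 i j)

lemma bwd_mem (q : Matrix (Fin n) (Fin n) K × Matrix (Fin (n - m - l)) (Fin (n - m - l)) K) :
    bwd K n m l q ∈ solSpace K n m l := by
  rw [mem_solSpace_iff]
  intro i j
  simp only [bwd]
  constructor
  · split_ifs <;> first | rfl | omega
  · split_ifs <;> first | rfl | omega

/-- The linear equivalence. -/
noncomputable def solEquiv :
    solSpace K n m l ≃ₗ[K]
      Matrix (Fin n) (Fin n) K × Matrix (Fin (n - m - l)) (Fin (n - m - l)) K where
  toFun p := fwd K n m l p.val
  map_add' p q := by
    refine Prod.ext ?_ ?_ <;> funext i j <;>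
      simp only [fwd, Submodule.coe_add, Prod.fst_add, Prod.snd_add, Matrix.add_apply,
        Prod.fst_add, Prod.snd_add] <;> (try split_ifs) <;> (erw [Pi.add_apply]) <;> simp [*]
  map_smul' c p := by
    refine Prod.ext ?_ ?_ <;> funext i j <;>
      simp only [fwd, SetLike.val_smul, Prod.smul_fst, Prod.smul_snd, Matrix.smul_apply,
        RingHom.id_apply] <;> (try split_ifs) <;> (erw [Pi.smul_apply]) <;> simp [*]
  invFun q := ⟨bwd K n m l q, bwd_mem K n m l q⟩
  left_inv p := by
    obtain ⟨p, hp⟩ := p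
    rw [mem_solSpace_iff] at hp
    apply Subtype.ext
    refine Prod.ext ?_ ?_ <;> funext i j
    · show (bwd K n m l (fwd K n m l p)).1 i j = p.1 i j
      simp only [bwd, fwd]
      split_ifs with h
      · obtain ⟨hm, hcase⟩ := h
        rcases hp i j with ⟨h1, h2⟩
        rcases hcase with hi | ⟨hi1, hj1⟩
        · rw [if_pos hi, if_neg (by omega)] at h1; exact h1.symm
        · rw [if_pos ⟨hm, hj1⟩, if_neg (by omega)] at h2; exact h2.symm
      · rfl
    · show (bwd K n m l (fwd K n m l p)).2 i j = p.2 i j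
      rcases hp i j with ⟨h1, h2⟩
      simp only [bwd, fwd]
      split_ifs with hi1 hj1 hi2 hjB hj2' hjm hjc <;> try rfl
      · -- i < m, ¬ (m ≤ j ∧ ...): so j < m; use h1
        rw [if_pos hi1, if_pos (show (j : ℕ) < m by omega)] at h1
        exact h1
      · -- m ≤ i < m+l, j ∈ B, the fwd condition on (i,j) false branch: p.1 i j = p.2 i j
        rw [if_pos hjB, if_pos (by omega)] at h2
        exact h2
      · -- m ≤ i < m+l, j ∉ B : 0 = p.2 i j
        by_cases hjm' : (j : ℕ) < m
        · rw [if_neg (by omega), if_pos hjm'] at h1; exact h1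
        · rw [if_neg hjB, if_pos (by omega)] at h2; exact h2
      · -- i ≥ m + l, j < m : 0 = p.2 i j
        rw [if_neg (by omega), if_pos (by assumption)] at h1; exact h1
      · -- i ≥ m + l, j ≥ m + l : small matrix entry
        exact congr_arg₂ p.2 (Fin.ext (by simp only [Fin.val_mk]; omega)) (Fin.ext (by simp only [Fin.val_mk]; omega))
      · -- i ≥ m + l, m ≤ j < m + l: fwd condition true
        omega
  right_inv q := by
    refine Prod.ext ?_ ?_ <;> funext i j
    · show (fwd K n m l (bwd K n m l q)).1 i j = q.1 i j
      simp only [fwd, bwd]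
      split_ifs <;> first | rfl | omega
    · show (fwd K n m l (bwd K n m l q)).2 i j = q.2 i j
      simp only [fwd, bwd]
      split_ifs with h1 h2 h3 h4 <;> try omega
      exact congr_arg₂ q.2 (Fin.ext (by simp only [Fin.val_mk]; omega)) (Fin.ext (by simp only [Fin.val_mk]; omega))

end Aux

/-- STATEMENT 17: the space of pairs `(X,X')` with `U·X = X'·U` and `X·V = V·X'` has
dimension `n² + (n−m−l)²`. -/
theorem stmt17 (K : Type*) [Field K] (n m l : ℕ) (hn : 1 ≤ n) (hml : m + l ≤ n) :
    Module.finrank K (solSpace K n m l) = n ^ 2 + (n - m - l) ^ 2 := by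
  rw [LinearEquiv.finrank_eq (solEquiv K n m l), Module.finrank_prod,
    Module.finrank_matrix, Module.finrank_matrix]
  simp [Fintype.card_fin]
  ring
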